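/- arXiv:1810.00969 — 2 statements merged into one kernel-verified Lean document; each statement's English description precedes it below -/
import Mathlib

section
/- Let $0 < \alpha \le \beta \le \gamma$. Then a $\mathrm{Beta}(\beta, \gamma - \beta)$ random variable stochastically dominates a $\mathrm{Beta}(\alpha, \gamma - \alpha)$ random variable; that is, for all $x \in [0,1]$, $\Pr\{\mathrm{Beta}(\beta, \gamma-\beta) \le x\} \le \Pr\{\mathrm{Beta}(\alpha, \gamma-\alpha) \le x\}$. -/
open MeasureTheory

/-- The Beta(a,b) distribution on ℝ, defined via its density
`x^(a-1) (1-x)^(b-1) / B(a,b)` on `(0,1)`. -/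
noncomputable def betaMeasure (a b : ℝ) : Measure ℝ :=
  (volume.restrict (Set.Ioo (0:ℝ) 1)).withDensity
    (fun x => ENNReal.ofReal (Real.Gamma (a + b) / (Real.Gamma a * Real.Gamma b) *
      x ^ (a - 1) * (1 - x) ^ (b - 1)))


open Set


lemma realBetaIntegral {a b : ℝ} (ha : 0 < a) (hb : 0 < b) :
    ∫ x in Ioo (0:ℝ) 1, x ^ (a - 1) * (1 - x) ^ (b - 1) =
      Real.Gamma a * Real.Gamma b / Real.Gamma (a + b) := by
  have h := Complex.Gamma_mul_Gamma_eq_betaIntegral (s := (a:ℂ)) (t := (b:ℂ))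
    (by simpa using ha) (by simpa using hb)
  have hBeta : Complex.betaIntegral (a:ℂ) (b:ℂ) =
      ((∫ x in (0:ℝ)..1, x ^ (a - 1) * (1 - x) ^ (b - 1) : ℝ) : ℂ) := by
    rw [Complex.betaIntegral]
    rw [← intervalIntegral.integral_ofReal]
    refine intervalIntegral.integral_congr fun x hx => ?_
    rw [uIcc_of_le zero_le_one] at hx
    have e1 : ((x ^ (a-1) : ℝ) : ℂ) = (x:ℂ) ^ ((a:ℂ)-1) := by
      rw [Complex.ofReal_cpow hx.1]; norm_cast
    have e2 : (((1-x) ^ (b-1) : ℝ) : ℂ) = ((1-x:ℝ):ℂ) ^ ((b:ℂ)-1) := by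
      rw [Complex.ofReal_cpow (by linarith [hx.2])]; norm_cast
    rw [Complex.ofReal_mul, e1, e2]
    push_cast
    ring
  rw [hBeta] at h
  have hne : Real.Gamma (a + b) ≠ 0 := (Real.Gamma_pos_of_pos (by linarith)).ne'
  have h2 : Real.Gamma a * Real.Gamma b = Real.Gamma (a + b) *
      ∫ x in (0:ℝ)..1, x ^ (a - 1) * (1 - x) ^ (b - 1) := by
    have := h
    rw [Complex.Gamma_ofReal, Complex.Gamma_ofReal, ← Complex.ofReal_add,
      Complex.Gamma_ofReal] at this
    exact_mod_cast this
  rw [intervalIntegral.integral_of_le zero_le_one, integral_Ioc_eq_integral_Ioo] at h2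
  rw [eq_div_iff hne]
  linarith [h2]


lemma realBetaIntegrable {a b : ℝ} (ha : 0 < a) (hb : 0 < b) :
    IntegrableOn (fun x => x ^ (a - 1) * (1 - x) ^ (b - 1)) (Ioo (0:ℝ) 1) := by
  have h := Complex.betaIntegral_convergent (u := (a:ℂ)) (v := (b:ℂ))
    (by simpa using ha) (by simpa using hb)
  rw [intervalIntegrable_iff_integrableOn_Ioc_of_le zero_le_one] at h
  have h2 : IntegrableOn (fun x : ℝ => ((x:ℂ) ^ ((a:ℂ)-1) * ((1:ℂ)-x) ^ ((b:ℂ)-1)).re)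
      (Ioc (0:ℝ) 1) := h.re
  refine (h2.mono_set Ioo_subset_Ioc_self).congr_fun (fun x hx => ?_) measurableSet_Ioo
  have e1 : ((x ^ (a-1) : ℝ) : ℂ) = (x:ℂ) ^ ((a:ℂ)-1) := by
    rw [Complex.ofReal_cpow hx.1.le]; norm_cast
  have e2 : (((1-x) ^ (b-1) : ℝ) : ℂ) = ((1-x:ℝ):ℂ) ^ ((b:ℂ)-1) := by
    rw [Complex.ofReal_cpow (by linarith [hx.2])]; norm_cast
  have : ((x:ℂ) ^ ((a:ℂ)-1) * ((1:ℂ)-x) ^ ((b:ℂ)-1)) =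
      ((x ^ (a-1) * (1-x) ^ (b-1) : ℝ) : ℂ) := by
    rw [Complex.ofReal_mul, e1, e2]; push_cast; ring
  dsimp only
  rw [this, Complex.ofReal_re]

noncomputable def betaD (a b : ℝ) (x : ℝ) : ℝ :=
  Real.Gamma (a + b) / (Real.Gamma a * Real.Gamma b) * x ^ (a - 1) * (1 - x) ^ (b - 1)

lemma betaD_measurable (a b : ℝ) :
    Measurable (fun x => ENNReal.ofReal (betaD a b x)) := by
  apply ENNReal.measurable_ofReal.comp
  unfold betaD
  fun_prop

lemma lintegral_betaD {a b : ℝ} (ha : 0 < a) (hb : 0 < b) :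
    ∫⁻ x in Ioo (0:ℝ) 1, ENNReal.ofReal (betaD a b x) = 1 := by
  have hInt : IntegrableOn (fun x => betaD a b x) (Ioo (0:ℝ) 1) := by
    unfold betaD
    simp_rw [mul_assoc]
    exact (realBetaIntegrable ha hb).const_mul _
  have hnn : 0 ≤ᵐ[volume.restrict (Ioo (0:ℝ) 1)] fun x => betaD a b x := by
    filter_upwards [ae_restrict_mem measurableSet_Ioo] with x hx
    unfold betaD
    have := Real.Gamma_pos_of_pos ha
    have := Real.Gamma_pos_of_pos hb
    have := Real.Gamma_pos_of_pos (show (0:ℝ) < a + b by linarith)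
    have h1 : (0:ℝ) ≤ x ^ (a-1) := Real.rpow_nonneg hx.1.le _
    have h2 : (0:ℝ) ≤ (1-x) ^ (b-1) := Real.rpow_nonneg (by linarith [hx.2]) _
    positivity
  rw [← ofReal_integral_eq_lintegral_ofReal hInt hnn]
  unfold betaD
  rw [show (fun x : ℝ => Real.Gamma (a + b) / (Real.Gamma a * Real.Gamma b) *
      x ^ (a - 1) * (1 - x) ^ (b - 1)) = fun x : ℝ =>
      Real.Gamma (a + b) / (Real.Gamma a * Real.Gamma b) *
      (x ^ (a - 1) * (1 - x) ^ (b - 1)) by funext x; ring]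
  rw [integral_const_mul, realBetaIntegral ha hb]
  have h1 := (Real.Gamma_pos_of_pos ha).ne'
  have h2 := (Real.Gamma_pos_of_pos hb).ne'
  have h3 := (Real.Gamma_pos_of_pos (show (0:ℝ) < a + b by linarith)).ne'
  rw [show Real.Gamma (a + b) / (Real.Gamma a * Real.Gamma b) *
      (Real.Gamma a * Real.Gamma b / Real.Gamma (a + b)) = 1 by field_simp,
    ENNReal.ofReal_one]

lemma crossing {α β γ : ℝ} (hα : 0 < α) (hαβ : α < β) (hβγ : β < γ) :
    ∃ t0 ∈ Ioo (0:ℝ) 1,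
      (∀ t ∈ Ioo (0:ℝ) 1, t ≤ t0 → betaD β (γ-β) t ≤ betaD α (γ-α) t) ∧
      (∀ t ∈ Ioo (0:ℝ) 1, t0 ≤ t → betaD α (γ-α) t ≤ betaD β (γ-β) t) := by
  have hδ : (0:ℝ) < β - α := by linarith
  set δ := β - α with hδdef
  set cα := Real.Gamma (α + (γ - α)) / (Real.Gamma α * Real.Gamma (γ - α)) with hcαdef
  set cβ := Real.Gamma (β + (γ - β)) / (Real.Gamma β * Real.Gamma (γ - β)) with hcβdef
  have hcα : 0 < cα := div_pos (Real.Gamma_pos_of_pos (by linarith))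
    (mul_pos (Real.Gamma_pos_of_pos hα) (Real.Gamma_pos_of_pos (by linarith)))
  have hcβ : 0 < cβ := div_pos (Real.Gamma_pos_of_pos (by linarith))
    (mul_pos (Real.Gamma_pos_of_pos (by linarith)) (Real.Gamma_pos_of_pos (by linarith)))
  set K := (cα / cβ) ^ (1/δ) with hKdef
  have hK : 0 < K := Real.rpow_pos_of_pos (div_pos hcα hcβ) _
  have h1K : (0:ℝ) < 1 + K := by linarith
  refine ⟨K / (1 + K), ⟨div_pos hK h1K, (div_lt_one h1K).2 (by linarith)⟩, ?_, ?_⟩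
  all_goals {
    set t0 := K / (1 + K) with ht0def
    have ht0a : 0 < t0 := div_pos hK h1K
    have ht0b : t0 < 1 := (div_lt_one h1K).2 (by linarith)
    have h1t0 : 1 - t0 = 1 / (1 + K) := by
      rw [ht0def]; field_simp; ring
    have hKδ : K ^ δ = cα / cβ := by
      rw [hKdef, ← Real.rpow_mul (div_pos hcα hcβ).le, one_div,
        inv_mul_cancel₀ hδ.ne', Real.rpow_one]
    have hkey : cβ * t0 ^ δ = cα * (1 - t0) ^ δ := by
      rw [h1t0, ht0def, Real.div_rpow hK.le h1K.le, Real.div_rpow zero_le_one h1K.le,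
        hKδ, Real.one_rpow]
      field_simp
    have hcore1 : ∀ t ∈ Ioo (0:ℝ) 1, t ≤ t0 → cβ * t ^ δ ≤ cα * (1-t) ^ δ := by
      intro t ht hle
      calc cβ * t ^ δ ≤ cβ * t0 ^ δ :=
            mul_le_mul_of_nonneg_left (Real.rpow_le_rpow ht.1.le hle hδ.le) hcβ.le
        _ = cα * (1 - t0) ^ δ := hkey
        _ ≤ cα * (1-t) ^ δ :=
            mul_le_mul_of_nonneg_left
              (Real.rpow_le_rpow (by linarith) (by linarith) hδ.le) hcα.le
    have hcore2 : ∀ t ∈ Ioo (0:ℝ) 1, t0 ≤ t → cα * (1-t) ^ δ ≤ cβ * t ^ δ := by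
      intro t ht hle
      calc cα * (1-t) ^ δ ≤ cα * (1 - t0) ^ δ :=
            mul_le_mul_of_nonneg_left
              (Real.rpow_le_rpow (by linarith [ht.2]) (by linarith) hδ.le) hcα.le
        _ = cβ * t0 ^ δ := hkey.symm
        _ ≤ cβ * t ^ δ :=
            mul_le_mul_of_nonneg_left (Real.rpow_le_rpow ht0a.le hle hδ.le) hcβ.le
    intro t ht hle
    have ht1 : (0:ℝ) < t := ht.1
    have ht2 : (0:ℝ) < 1 - t := by linarith [ht.2]
    have hβexp : betaD β (γ-β) t = (cβ * t ^ δ) * (t ^ (α-1) * (1-t) ^ (γ-β-1)) := by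
      unfold betaD
      rw [← hcβdef, show β - 1 = δ + (α-1) by rw [hδdef]; ring, Real.rpow_add ht1]
      ring
    have hαexp : betaD α (γ-α) t = (cα * (1-t) ^ δ) * (t ^ (α-1) * (1-t) ^ (γ-β-1)) := by
      unfold betaD
      rw [← hcαdef, show γ - α - 1 = δ + (γ-β-1) by rw [hδdef]; ring, Real.rpow_add ht2]
      ring
    have hM : (0:ℝ) ≤ t ^ (α-1) * (1-t) ^ (γ-β-1) :=
      mul_nonneg (Real.rpow_nonneg ht1.le _) (Real.rpow_nonneg ht2.le _)
    rw [hβexp, hαexp]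
    first
      | exact mul_le_mul_of_nonneg_right (hcore1 t ht hle) hM
      | exact mul_le_mul_of_nonneg_right (hcore2 t ht hle) hM
  }


lemma betaMeasure_apply (a b : ℝ) {s : Set ℝ} (hs : MeasurableSet s) :
    betaMeasure a b s = ∫⁻ t in s ∩ Ioo (0:ℝ) 1, ENNReal.ofReal (betaD a b t) := by
  show ((volume.restrict (Set.Ioo (0:ℝ) 1)).withDensity
    (fun x => ENNReal.ofReal (betaD a b x))) s = _
  rw [withDensity_apply _ hs, Measure.restrict_restrict hs]

lemma betaMeasure_univ {a b : ℝ} (ha : 0 < a) (hb : 0 < b) :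
    betaMeasure a b univ = 1 := by
  rw [betaMeasure_apply a b MeasurableSet.univ, univ_inter, lintegral_betaD ha hb]

/-- For `0 < α ≤ β ≤ γ`, `Beta(β, γ-β)` stochastically dominates `Beta(α, γ-α)`:
for all `x ∈ [0,1]`, `Pr{Beta(β,γ-β) ≤ x} ≤ Pr{Beta(α,γ-α) ≤ x}`. -/
theorem beta_stochastic_dominance (α β γ : ℝ) (hα : 0 < α) (hαβ : α ≤ β) (hβγ : β ≤ γ) :
    ∀ x ∈ Set.Icc (0:ℝ) 1,
      betaMeasure β (γ - β) (Set.Iic x) ≤ betaMeasure α (γ - α) (Set.Iic x) := by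
  intro x hx
  rcases eq_or_lt_of_le hβγ with hbg | hbg
  · have h0 : γ - β = 0 := by rw [← hbg]; ring
    rw [h0]
    have : betaMeasure β 0 = 0 := by
      simp [betaMeasure, Real.Gamma_zero]
    rw [this]
    exact zero_le
  rcases eq_or_lt_of_le hαβ with hab | hab
  · subst hab; exact le_refl _
  have hγα : 0 < γ - α := by linarith
  have hγβ : 0 < γ - β := by linarith
  obtain ⟨t0, ht0, hle, hge⟩ := crossing hα hab hbg
  rcases le_total x t0 with hxt | hxt
  · rw [betaMeasure_apply _ _ measurableSet_Iic, betaMeasure_apply _ _ measurableSet_Iic]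
    exact setLIntegral_mono (betaD_measurable α (γ-α)) fun t ht =>
      ENNReal.ofReal_le_ofReal (hle t ht.2 (le_trans ht.1 hxt))
  · have hIoi : betaMeasure α (γ-α) (Ioi x) ≤ betaMeasure β (γ-β) (Ioi x) := by
      rw [betaMeasure_apply _ _ measurableSet_Ioi, betaMeasure_apply _ _ measurableSet_Ioi]
      exact setLIntegral_mono (betaD_measurable β (γ-β)) fun t ht =>
        ENNReal.ofReal_le_ofReal (hge t ht.2 (le_trans hxt ht.1.le))
    have hcompl : ∀ a b : ℝ, 0 < a → 0 < b →
        betaMeasure a b (Iic x) = 1 - betaMeasure a b (Ioi x) := by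
      intro a b ha hb
      rw [← compl_Ioi, measure_compl measurableSet_Ioi, betaMeasure_univ ha hb]
      refine ne_of_lt (lt_of_le_of_lt (measure_mono (subset_univ _)) ?_)
      rw [betaMeasure_univ ha hb]
      exact ENNReal.one_lt_top
    rw [hcompl β (γ-β) (by linarith) hγβ, hcompl α (γ-α) hα hγα]
    exact tsub_le_tsub_left hIoi 1
end

section
/- Let $k \ge 1$ be a real number, $0 < t < 1$, and let $f_{k/2,k/2}$ be the density of a $\mathrm{Beta}(k/2,k/2)$ random variable. Then $\int_t^1 f_{k/2,k/2}(x)\,dx \le 2(1-t)^{k/2}\, 3^k / k$, and consequently $\Pr\{\mathrm{Beta}(k/2,k/2) \ge t\} \le (2/k)(1-t)^{k/2}\,3^k$. -/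
open MeasureTheory Set

/-- The density of a `Beta(k/2, k/2)` random variable. -/
noncomputable def betaHalfDensity (k : ℝ) (x : ℝ) : ℝ :=
  Real.Gamma k / (Real.Gamma (k / 2) * Real.Gamma (k / 2)) *
    (x * (1 - x)) ^ (k / 2 - 1)

namespace BetaTailAux

lemma integral_mono_Ioo {a b : ℝ} {f g : ℝ → ℝ} (hab : a ≤ b)
    (hf : IntervalIntegrable f volume a b) (hg : IntervalIntegrable g volume a b)
    (h : ∀ x ∈ Set.Ioo a b, f x ≤ g x) :
    ∫ x in a..b, f x ≤ ∫ x in a..b, g x := by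
  rw [intervalIntegral.integral_of_le hab, intervalIntegral.integral_of_le hab,
    integral_Ioc_eq_integral_Ioo, integral_Ioc_eq_integral_Ioo]
  exact setIntegral_mono_on ((hf.1).mono_set Set.Ioo_subset_Ioc_self)
    ((hg.1).mono_set Set.Ioo_subset_Ioc_self) measurableSet_Ioo h

lemma intgr {c : ℝ} (hc : -1 < c) :
    IntervalIntegrable (fun x : ℝ => x ^ c * (1 - x) ^ c) volume 0 1 := by
  have h1 : IntervalIntegrable (fun x : ℝ => x ^ c * (1 - x) ^ c) volume 0 (1/2) := by
    apply (intervalIntegral.intervalIntegrable_rpow' hc).mul_continuousOn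
    apply ContinuousOn.rpow_const (by fun_prop)
    intro x hx
    rw [Set.uIcc_of_le (by norm_num : (0:ℝ) ≤ 1/2)] at hx
    exact Or.inl (by intro h0; have := hx.2; linarith)
  have h2 : IntervalIntegrable (fun x : ℝ => x ^ c * (1 - x) ^ c) volume (1/2) 1 := by
    have hb : IntervalIntegrable (fun x : ℝ => (1 - x) ^ c) volume (1/2) 1 := by
      have := (intervalIntegral.intervalIntegrable_rpow' hc (a := 0) (b := 1/2)).comp_sub_left 1
      norm_num at this
      exact this.symm
    apply hb.continuousOn_mul
    apply ContinuousOn.rpow_const (by fun_prop)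
    intro x hx
    rw [Set.uIcc_of_le (by norm_num : (1:ℝ)/2 ≤ 1)] at hx
    exact Or.inl (by intro h0; have := hx.1; rw [h0] at this; norm_num at this)
  exact h1.trans h2

lemma gamma_sq_eq {a : ℝ} (ha : 0 < a) :
    Real.Gamma a * Real.Gamma a =
      Real.Gamma (2 * a) * ∫ x in (0:ℝ)..1, x ^ (a - 1) * (1 - x) ^ (a - 1) := by
  have h := Complex.Gamma_mul_Gamma_eq_betaIntegral (s := (a:ℂ)) (t := (a:ℂ))
    (by simpa using ha) (by simpa using ha)
  have hbeta : Complex.betaIntegral a a =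
      ((∫ x in (0:ℝ)..1, x ^ (a - 1) * (1 - x) ^ (a - 1) : ℝ) : ℂ) := by
    rw [Complex.betaIntegral, ← intervalIntegral.integral_ofReal]
    apply intervalIntegral.integral_congr
    intro x hx
    rw [Set.uIcc_of_le (by norm_num : (0:ℝ) ≤ 1)] at hx
    have e1 : ((a:ℂ)) - 1 = ((a - 1 : ℝ) : ℂ) := by push_cast; ring
    push_cast
    rw [e1, ← Complex.ofReal_cpow hx.1 (a-1), ← Complex.ofReal_one, ← Complex.ofReal_sub,
      ← Complex.ofReal_cpow (by linarith [hx.2]) (a-1)]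
  rw [hbeta] at h
  have h2a : ((a:ℂ)) + a = ((2 * a : ℝ) : ℂ) := by push_cast; ring
  rw [h2a, Complex.Gamma_ofReal, Complex.Gamma_ofReal] at h
  exact_mod_cast h

lemma tail_bound_real (k t : ℝ) (hk : 1 ≤ k) (ht0 : 0 < t) (ht1 : t < 1) :
    (∫ x in t..1, betaHalfDensity k x) ≤ 2 * (1 - t) ^ (k / 2) * 3 ^ k / k := by
  have hk0 : 0 < k := by linarith
  have hc : (-1:ℝ) < k/2 - 1 := by linarith
  have hs0 : 0 < 1 - t := by linarith
  have hΓk : 0 < Real.Gamma k := Real.Gamma_pos_of_pos hk0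
  have hΓa : 0 < Real.Gamma (k/2) := Real.Gamma_pos_of_pos (by linarith)
  -- nonnegativity a.e. on (0,1]
  have hnn : 0 ≤ᵐ[volume.restrict (Set.Ioc (0:ℝ) 1)]
      fun x : ℝ => x ^ (k/2-1) * (1 - x) ^ (k/2-1) := by
    refine (ae_restrict_iff' measurableSet_Ioc).mpr (Filter.Eventually.of_forall fun x hx => ?_)
    have h1 : (0:ℝ) ≤ x := le_of_lt hx.1
    have h2 : (0:ℝ) ≤ 1 - x := by linarith [hx.2]
    positivity
  have hint01 := intgr hc
  have hintt1 : IntervalIntegrable (fun x : ℝ => x ^ (k/2-1) * (1 - x) ^ (k/2-1)) volume t 1 :=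
    hint01.mono_set (by
      rw [Set.uIcc_of_le ht1.le, Set.uIcc_of_le (by norm_num : (0:ℝ) ≤ 1)]
      exact Set.Icc_subset_Icc (le_of_lt ht0) le_rfl)
  have hint1x : IntervalIntegrable (fun x : ℝ => (1 - x) ^ (k/2-1)) volume t 1 := by
    have := (intervalIntegral.intervalIntegrable_rpow' hc (a := 0) (b := 1 - t)).comp_sub_left 1
    norm_num at this
    exact this.symm
  -- Gamma identity
  set B : ℝ := ∫ x in (0:ℝ)..1, x ^ (k/2-1) * (1 - x) ^ (k/2-1) with hB_def
  have hgam : Real.Gamma (k/2) * Real.Gamma (k/2) = Real.Gamma k * B := by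
    have := gamma_sq_eq (a := k/2) (by linarith)
    rwa [show 2 * (k/2) = k by ring] at this
  -- express the tail integral
  have hIeq : (∫ x in t..1, betaHalfDensity k x)
      = (Real.Gamma k / (Real.Gamma (k/2) * Real.Gamma (k/2))) *
        ∫ x in t..1, x ^ (k/2-1) * (1 - x) ^ (k/2-1) := by
    simp only [betaHalfDensity]
    rw [intervalIntegral.integral_const_mul]
    congr 1
    apply intervalIntegral.integral_congr
    intro x hx
    rw [Set.uIcc_of_le ht1.le] at hx
    exact Real.mul_rpow (by linarith [hx.1]) (by linarith [hx.2])
  set I : ℝ := ∫ x in t..1, x ^ (k/2-1) * (1 - x) ^ (k/2-1) with hI_def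
  have hI0 : 0 ≤ I := by
    apply intervalIntegral.integral_nonneg ht1.le
    intro x hx
    have h1 : (0:ℝ) ≤ x := le_trans ht0.le hx.1
    have h2 : (0:ℝ) ≤ 1 - x := by linarith [hx.2]
    positivity
  have hILB : I ≤ B := intervalIntegral.integral_mono_interval ht0.le ht1.le le_rfl hnn hint01
  have hIeval : (∫ x in t..1, (1 - x) ^ (k/2-1)) = (1-t)^(k/2) / (k/2) := by
    have h := intervalIntegral.integral_comp_sub_left (a := t) (b := 1)
      (fun x : ℝ => x ^ (k/2-1)) 1
    norm_num at h
    rw [h, integral_rpow (Or.inl hc), Real.zero_rpow (by intro h0; linarith :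
      (k/2-1) + 1 ≠ 0), show (k/2-1) + 1 = k/2 by ring]
    ring
  have h3k : (3:ℝ) ≤ 3 ^ k := by
    have := Real.rpow_le_rpow_of_exponent_le (by norm_num : (1:ℝ) ≤ 3) hk
    rwa [Real.rpow_one] at this
  have h19 : ((1:ℝ)/9) ^ (k/2-1) = (3:ℝ) ^ (2 - k) := by
    rw [show (1/9 : ℝ) = (3:ℝ) ^ (-2 : ℝ) by
        rw [show ((-2:ℝ)) = ((-2 : ℤ) : ℝ) by norm_num, Real.rpow_intCast]; norm_num,
      ← Real.rpow_mul (by norm_num)]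
    congr 1; ring
  rcases le_or_gt 2 k with hk2 | hk2
  · -- case k ≥ 2
    have hc0 : (0:ℝ) ≤ k/2 - 1 := by linarith
    have hBlow : (3:ℝ) ^ (1 - k) ≤ B := by
      have hmid : ((1:ℝ)/3) * ((1/9 : ℝ)) ^ (k/2-1) ≤
          ∫ x in (1/3 : ℝ)..(2/3), x ^ (k/2-1) * (1 - x) ^ (k/2-1) := by
        have hmono := integral_mono_Ioo (a := 1/3) (b := 2/3)
          (f := fun _ : ℝ => ((1/9 : ℝ)) ^ (k/2-1)) (by norm_num)
          intervalIntegrable_const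
          (hint01.mono_set (by
            rw [Set.uIcc_of_le (by norm_num : (1:ℝ)/3 ≤ 2/3),
              Set.uIcc_of_le (by norm_num : (0:ℝ) ≤ 1)]
            exact Set.Icc_subset_Icc (by norm_num) (by norm_num)))
          (fun x hx => by
            rw [← Real.mul_rpow (by linarith [hx.1] : (0:ℝ) ≤ x) (by linarith [hx.2])]
            refine Real.rpow_le_rpow (by norm_num) ?_ hc0
            nlinarith [hx.1, hx.2])
        rw [intervalIntegral.integral_const, smul_eq_mul] at hmono
        calc ((1:ℝ)/3) * ((1/9 : ℝ)) ^ (k/2-1)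
            = (2/3 - 1/3 : ℝ) * ((1/9 : ℝ)) ^ (k/2-1) := by norm_num
          _ ≤ _ := hmono
      have hsub : (∫ x in (1/3 : ℝ)..(2/3), x ^ (k/2-1) * (1 - x) ^ (k/2-1)) ≤ B :=
        intervalIntegral.integral_mono_interval (by norm_num) (by norm_num) (by norm_num)
          hnn hint01
      have heq : ((1:ℝ)/3) * ((1/9 : ℝ)) ^ (k/2-1) = (3:ℝ) ^ (1 - k) := by
        rw [h19, show (1/3 : ℝ) = (3:ℝ) ^ (-1 : ℝ) by
            rw [show ((-1:ℝ)) = ((-1 : ℤ) : ℝ) by norm_num, Real.rpow_intCast]; norm_num,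
          ← Real.rpow_add (by norm_num)]
        congr 1; ring
      linarith [hmid, hsub, heq.symm.le]
    have hBpos : (0:ℝ) < B := lt_of_lt_of_le (Real.rpow_pos_of_pos (by norm_num) _) hBlow
    have hCeq : Real.Gamma k / (Real.Gamma (k/2) * Real.Gamma (k/2)) = 1 / B := by
      rw [hgam]; field_simp
    have hCB : 1 / B ≤ (3:ℝ) ^ k := by
      have h1 := one_div_le_one_div_of_le (Real.rpow_pos_of_pos (by norm_num) (1-k)) hBlow
      have h2 : (1:ℝ) / (3:ℝ) ^ (1-k) = (3:ℝ) ^ (k-1) := by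
        rw [one_div, ← Real.rpow_neg (by norm_num)]
        congr 1; ring
      have h3 : (3:ℝ) ^ (k-1) ≤ (3:ℝ) ^ k :=
        Real.rpow_le_rpow_of_exponent_le (by norm_num) (by linarith)
      linarith [h2 ▸ h1]
    have hIle : I ≤ (1-t)^(k/2) / (k/2) := by
      rw [← hIeval]
      refine integral_mono_Ioo ht1.le hintt1 hint1x fun x hx => ?_
      have h1 : x ^ (k/2-1) ≤ 1 :=
        Real.rpow_le_one (le_trans ht0.le hx.1.le) hx.2.le hc0
      have h2 : (0:ℝ) ≤ (1 - x) ^ (k/2-1) := Real.rpow_nonneg (by linarith [hx.2]) _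
      nlinarith
    rw [hIeq, hCeq]
    calc (1 / B) * I ≤ (3:ℝ)^k * ((1-t)^(k/2) / (k/2)) := by
          apply mul_le_mul hCB hIle hI0 (by positivity)
      _ = 2 * (1-t)^(k/2) * 3^k / k := by field_simp
  · -- case k < 2
    have hc0 : k/2 - 1 < 0 := by linarith
    have hB1 : (1:ℝ) ≤ B := by
      have hmono := integral_mono_Ioo (a := 0) (b := 1) (f := fun _ : ℝ => (1:ℝ))
        (by norm_num) intervalIntegrable_const hint01 (fun x hx => by
          have h1 : 1 ≤ x ^ (k/2-1) :=
            Real.one_le_rpow_of_pos_of_le_one_of_nonpos hx.1 hx.2.le hc0.le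
          have h2 : 1 ≤ (1-x) ^ (k/2-1) :=
            Real.one_le_rpow_of_pos_of_le_one_of_nonpos (by linarith [hx.2])
              (by linarith [hx.1]) hc0.le
          nlinarith)
      simpa using hmono
    have hBpos : (0:ℝ) < B := by linarith
    have hCeq : Real.Gamma k / (Real.Gamma (k/2) * Real.Gamma (k/2)) = 1 / B := by
      rw [hgam]; field_simp
    have hCB1 : 1 / B ≤ 1 := by rw [div_le_one hBpos]; exact hB1
    rw [hIeq, hCeq]
    rcases le_or_gt t (1/9) with ht9 | ht9
    · -- t small: bound by total mass 1
      have h1 : (1 / B) * I ≤ 1 := by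
        rw [div_mul_eq_mul_div, one_mul, div_le_one hBpos]; exact hILB
      refine h1.trans ?_
      have hsk : (8:ℝ)/9 ≤ (1-t)^(k/2) := by
        have h2 : (1-t)^(1:ℝ) ≤ (1-t)^(k/2) :=
          Real.rpow_le_rpow_of_exponent_ge hs0 (by linarith) (by linarith)
        rw [Real.rpow_one] at h2; linarith
      rw [le_div_iff₀ hk0, one_mul]
      have hmm : (8/9:ℝ) * 3 ≤ (1-t)^(k/2) * 3^k :=
        mul_le_mul hsk h3k (by norm_num) (by positivity)
      linarith
    · -- t ≥ 1/9
      have htc3 : t ^ (k/2-1) ≤ 3 := by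
        have h1 : t ^ (k/2-1) ≤ (1/9 : ℝ) ^ (k/2-1) :=
          Real.rpow_le_rpow_of_nonpos (by norm_num) ht9.le hc0.le
        have h2 : (3:ℝ)^(2-k) ≤ (3:ℝ)^(1:ℝ) :=
          Real.rpow_le_rpow_of_exponent_le (by norm_num) (by linarith)
        rw [Real.rpow_one] at h2
        rw [h19] at h1
        linarith
      have hIle : I ≤ t^(k/2-1) * ((1-t)^(k/2) / (k/2)) := by
        have hmono := integral_mono_Ioo ht1.le hintt1 (hint1x.const_mul (t^(k/2-1)))
          (fun x hx => by
            have h1 : x ^ (k/2-1) ≤ t ^ (k/2-1) :=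
              Real.rpow_le_rpow_of_nonpos ht0 hx.1.le hc0.le
            have h2 : (0:ℝ) ≤ (1 - x) ^ (k/2-1) := Real.rpow_nonneg (by linarith [hx.2]) _
            exact mul_le_mul_of_nonneg_right h1 h2)
        rwa [intervalIntegral.integral_const_mul, hIeval] at hmono
      have hpos : (0:ℝ) ≤ (1-t)^(k/2) / (k/2) := by positivity
      calc (1 / B) * I ≤ 1 * (t^(k/2-1) * ((1-t)^(k/2) / (k/2))) := by
            apply mul_le_mul hCB1 hIle hI0 (by norm_num)
        _ ≤ 3 * ((1-t)^(k/2) / (k/2)) := by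
            rw [one_mul]; exact mul_le_mul_of_nonneg_right htc3 hpos
        _ ≤ 3^k * ((1-t)^(k/2) / (k/2)) := mul_le_mul_of_nonneg_right h3k hpos
        _ = 2 * (1-t)^(k/2) * 3^k / k := by field_simp

end BetaTailAux

/-- For real `k ≥ 1` and `0 < t < 1`, the upper tail of a `Beta(k/2,k/2)` random
variable satisfies `∫_t^1 f_{k/2,k/2}(x) dx ≤ 2(1-t)^(k/2) 3^k / k`, and
consequently `Pr{Beta(k/2,k/2) ≥ t} ≤ (2/k)(1-t)^(k/2) 3^k`. -/
theorem beta_half_tail_bound (k t : ℝ) (hk : 1 ≤ k) (ht0 : 0 < t) (ht1 : t < 1) :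
    (∫ x in t..1, betaHalfDensity k x) ≤ 2 * (1 - t) ^ (k / 2) * 3 ^ k / k ∧
    betaMeasure (k / 2) (k / 2) (Set.Ici t) ≤
      ENNReal.ofReal (2 / k * (1 - t) ^ (k / 2) * 3 ^ k) := by
  have h1 := BetaTailAux.tail_bound_real k t hk ht0 ht1
  refine ⟨h1, ?_⟩
  have hk0 : 0 < k := by linarith
  have hc : (-1:ℝ) < k/2 - 1 := by linarith
  have hIci : Set.Ici t ∩ Set.Ioo (0:ℝ) 1 = Set.Ico t 1 := by
    ext x
    simp only [Set.mem_inter_iff, Set.mem_Ici, Set.mem_Ioo, Set.mem_Ico]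
    constructor
    · rintro ⟨ha, _, hb⟩; exact ⟨ha, hb⟩
    · rintro ⟨ha, hb⟩; exact ⟨ha, lt_of_lt_of_le ht0 ha, hb⟩
  rw [betaMeasure, withDensity_apply _ measurableSet_Ici,
    Measure.restrict_restrict measurableSet_Ici, hIci]
  set g : ℝ → ℝ := fun x =>
    Real.Gamma (k/2 + k/2) / (Real.Gamma (k/2) * Real.Gamma (k/2)) *
      x ^ (k/2 - 1) * (1 - x) ^ (k/2 - 1) with hg_def
  have hΓk : 0 < Real.Gamma (k/2 + k/2) := by
    rw [add_halves]; exact Real.Gamma_pos_of_pos hk0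
  have hΓa : 0 < Real.Gamma (k/2) := Real.Gamma_pos_of_pos (by linarith)
  have hgnn : 0 ≤ᵐ[volume.restrict (Set.Ico t 1)] g := by
    refine (ae_restrict_iff' measurableSet_Ico).mpr (Filter.Eventually.of_forall fun x hx => ?_)
    have hx1 : (0:ℝ) ≤ x := le_trans ht0.le hx.1
    have hx2 : (0:ℝ) ≤ 1 - x := by linarith [hx.2]
    have hD : 0 ≤ Real.Gamma (k/2 + k/2) / (Real.Gamma (k/2) * Real.Gamma (k/2)) := by positivity
    simp only [hg_def]
    positivity
  have hbase : IntegrableOn (fun x : ℝ => x ^ (k/2-1) * (1-x) ^ (k/2-1)) (Set.Ioo t 1) volume := by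
    have h01 := (BetaTailAux.intgr hc).mono_set (by
      rw [Set.uIcc_of_le ht1.le, Set.uIcc_of_le (by norm_num : (0:ℝ) ≤ 1)]
      exact Set.Icc_subset_Icc ht0.le le_rfl)
    exact (intervalIntegrable_iff_integrableOn_Ioo_of_le ht1.le).mp h01
  have hgint : IntegrableOn g (Set.Ico t 1) volume := by
    rw [integrableOn_Ico_iff_integrableOn_Ioo]
    have := hbase.const_mul
      (Real.Gamma (k/2 + k/2) / (Real.Gamma (k/2) * Real.Gamma (k/2)))
    simp only [hg_def, mul_assoc] at this ⊢
    exact this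
  calc ∫⁻ x in Set.Ico t 1, ENNReal.ofReal (g x)
      = ENNReal.ofReal (∫ x in Set.Ico t 1, g x) :=
        (ofReal_integral_eq_lintegral_ofReal hgint hgnn).symm
    _ ≤ ENNReal.ofReal (2 / k * (1 - t) ^ (k / 2) * 3 ^ k) := by
        apply ENNReal.ofReal_le_ofReal
        have heq : (∫ x in Set.Ico t 1, g x) = ∫ x in t..1, betaHalfDensity k x := by
          rw [integral_Ico_eq_integral_Ioo,
            intervalIntegral.integral_of_le ht1.le, integral_Ioc_eq_integral_Ioo]
          apply setIntegral_congr_fun measurableSet_Ioo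
          intro x hx
          simp only [hg_def, betaHalfDensity]
          rw [add_halves, Real.mul_rpow (le_of_lt (lt_trans ht0 hx.1)) (by linarith [hx.2])]
          ring
        rw [heq]
        calc (∫ x in t..1, betaHalfDensity k x) ≤ 2 * (1 - t) ^ (k / 2) * 3 ^ k / k := h1
          _ = 2 / k * (1 - t) ^ (k / 2) * 3 ^ k := by ring
end
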